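/- Let A be a unital C*-algebra and let y ∈ A be a self-adjoint element with ¬(0 ≤ y) and ¬(y ≤ 0). Then for every self-adjoint x ∈ A, the set {α ∈ ℝ : 0 ≤ 1 + x + α·y} of real numbers is bounded. -/

import Mathlib

/-- If `0 ≤ c • 1 + α • z` for arbitrarily large `α`, then `0 ≤ z`. -/
lemma stmt6_aux {A : Type*} [CStarAlgebra A] [PartialOrder A] [StarOrderedRing A]
    (z : A) (c : ℝ)
    (h : ∀ n : ℕ, ∃ α : ℝ, (n + 1 : ℝ) ≤ α ∧ 0 ≤ c • (1 : A) + α • z) : 0 ≤ z := by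
  choose f hf hf' using h
  have hfpos : ∀ n, 0 < f n := fun n => lt_of_lt_of_le (by positivity) (hf n)
  have key : ∀ n, 0 ≤ (c / f n) • (1 : A) + z := by
    intro n
    have h1 : 0 ≤ (f n)⁻¹ • (c • (1 : A) + f n • z) :=
      smul_nonneg (inv_pos.mpr (hfpos n)).le (hf' n)
    have h2 : (f n)⁻¹ • (c • (1 : A) + f n • z) = (c / f n) • (1 : A) + z := by
      rw [smul_add, smul_smul, smul_smul, inv_mul_cancel₀ (hfpos n).ne', one_smul,
        inv_mul_eq_div]
    rwa [h2] at h1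
  have hft : Filter.Tendsto f Filter.atTop Filter.atTop :=
    Filter.tendsto_atTop_mono hf
      (Filter.tendsto_atTop_add_const_right _ 1 tendsto_natCast_atTop_atTop)
  have hlim : Filter.Tendsto (fun n => (c / f n) • (1 : A) + z) Filter.atTop (nhds z) := by
    have : Filter.Tendsto (fun n => c / f n) Filter.atTop (nhds 0) :=
      Filter.Tendsto.div_atTop tendsto_const_nhds hft
    simpa using (this.smul_const (1 : A)).add tendsto_const_nhds
  exact ge_of_tendsto' hlim key

theorem stmt6 {A : Type*} [CStarAlgebra A] [PartialOrder A] [StarOrderedRing A]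
    (y : A) (hy : IsSelfAdjoint y) (hpos : ¬ (0 ≤ y)) (hneg : ¬ (y ≤ 0)) :
    ∀ x : A, IsSelfAdjoint x →
      Bornology.IsBounded {α : ℝ | 0 ≤ (1 : A) + x + α • y} := by
  intro x hx
  set c : ℝ := ‖(1 : A) + x‖ with hc
  have hxs : IsSelfAdjoint ((1 : A) + x) := (IsSelfAdjoint.one A).add hx
  have key : ∀ α ∈ {α : ℝ | 0 ≤ (1 : A) + x + α • y}, 0 ≤ c • (1 : A) + α • y := by
    intro α hα
    have h1 : (1 : A) + x ≤ c • 1 := by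
      simpa [Algebra.algebraMap_eq_smul_one] using hxs.le_algebraMap_norm_self
    calc (0 : A) ≤ (1 : A) + x + α • y := hα
      _ ≤ c • 1 + α • y := add_le_add_left h1 _
  rw [Metric.isBounded_iff_subset_closedBall 0]
  by_contra hcon
  push_neg at hcon
  have hbig : ∀ n : ℕ, ∃ α ∈ {α : ℝ | 0 ≤ (1 : A) + x + α • y}, (n + 1 : ℝ) < |α| := by
    intro n
    obtain ⟨α, hα, hα'⟩ := Set.not_subset.mp (hcon (n + 1))
    refine ⟨α, hα, ?_⟩
    simpa [Real.dist_eq, abs_sub_comm] using hα'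
  -- split into: infinitely many n with a positive witness, or negative
  by_cases hsplit : ∀ n : ℕ, ∃ α ∈ {α : ℝ | 0 ≤ (1 : A) + x + α • y}, (n + 1 : ℝ) ≤ α
  · exact hpos (stmt6_aux y c fun n => by
      obtain ⟨α, hα, hα'⟩ := hsplit n
      exact ⟨α, hα', key α hα⟩)
  · push_neg at hsplit
    obtain ⟨m, hm⟩ := hsplit
    have hny : 0 ≤ -y := by
      refine stmt6_aux (-y) c fun n => ?_
      obtain ⟨α, hα, hα'⟩ := hbig (max m n)
      have hmax : ((max m n : ℕ) : ℝ) + 1 < |α| := hα'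
      have hmn : (n : ℝ) ≤ ((max m n : ℕ) : ℝ) := Nat.cast_le.mpr (le_max_right m n)
      have hmm : (m : ℝ) ≤ ((max m n : ℕ) : ℝ) := Nat.cast_le.mpr (le_max_left m n)
      have hαneg : α ≤ -((n : ℝ) + 1) := by
        rcases abs_cases α with ⟨h1, _⟩ | ⟨h1, _⟩
        · exact absurd (hm α hα) (by rw [h1] at hmax; push_neg; linarith only [hmax, hmm])
        · rw [h1] at hmax; linarith only [hmax, hmn]
      refine ⟨-α, by linarith only [hαneg], ?_⟩
      have h2 := key α hα
      rwa [neg_smul_neg]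
    exact hneg (neg_nonneg.mp hny)
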